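/- arXiv:2006.13913 — 2 statements merged into one kernel-verified Lean document; each statement's English description precedes it below -/
import Mathlib

section
/- Let Z be a normally distributed random variable with mean μ and variance σ², and let Φ denote the standard normal cumulative distribution function. Then E[Φ(Z)] = Φ(μ / √(1 + σ²)). -/
open MeasureTheory ProbabilityTheory Real
open scoped NNReal ENNReal

/-- Standard normal cumulative distribution function. -/
noncomputable def stdNormalCDF (x : ℝ) : ℝ :=
  ∫ t in Set.Iic x, gaussianPDFReal 0 1 t

namespace StdNormalAux

lemma continuous_phi : Continuous (gaussianPDFReal 0 1) := by
  unfold gaussianPDFReal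
  fun_prop

lemma stdNormalCDF_eq (x : ℝ) :
    stdNormalCDF x = stdNormalCDF 0 + ∫ t in (0:ℝ)..x, gaussianPDFReal 0 1 t := by
  have h := intervalIntegral.integral_Iic_sub_Iic (μ := volume)
    (f := gaussianPDFReal 0 1) ((integrable_gaussianPDFReal 0 1).integrableOn)
    ((integrable_gaussianPDFReal 0 1).integrableOn) (a := 0) (b := x)
  unfold stdNormalCDF
  linarith [h]

lemma hasDerivAt_stdNormalCDF (x : ℝ) :
    HasDerivAt stdNormalCDF (gaussianPDFReal 0 1 x) x := by
  have : HasDerivAt (fun u => stdNormalCDF 0 + ∫ t in (0:ℝ)..u, gaussianPDFReal 0 1 t)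
      (gaussianPDFReal 0 1 x) x := by
    refine HasDerivAt.const_add _ ?_
    exact intervalIntegral.integral_hasDerivAt_right
      ((integrable_gaussianPDFReal 0 1).intervalIntegrable)
      (continuous_phi.aestronglyMeasurable.stronglyMeasurableAtFilter)
      continuous_phi.continuousAt
  exact this.congr_of_eventuallyEq (Filter.Eventually.of_forall fun u => stdNormalCDF_eq u)

lemma continuous_stdNormalCDF : Continuous stdNormalCDF := by
  have : Differentiable ℝ stdNormalCDF := fun x => (hasDerivAt_stdNormalCDF x).differentiableAt
  exact this.continuous

lemma phi_even (t : ℝ) : gaussianPDFReal 0 1 (-t) = gaussianPDFReal 0 1 t := by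
  simp [gaussianPDFReal, neg_sub, sub_zero, neg_zero]

lemma stdNormalCDF_nonneg (x : ℝ) : 0 ≤ stdNormalCDF x :=
  integral_nonneg fun t => gaussianPDFReal_nonneg 0 1 t

lemma stdNormalCDF_add_neg (x : ℝ) : stdNormalCDF x + stdNormalCDF (-x) = 1 := by
  have h1 : stdNormalCDF (-x) = ∫ t in Set.Ioi x, gaussianPDFReal 0 1 t := by
    have h2 := integral_comp_neg_Iic (-x) (fun s => gaussianPDFReal 0 1 (-s))
    simp only [neg_neg] at h2
    unfold stdNormalCDF
    rw [h2]
    exact setIntegral_congr_fun measurableSet_Ioi fun t _ => phi_even t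
  rw [h1]
  unfold stdNormalCDF
  rw [intervalIntegral.integral_Iic_add_Ioi ((integrable_gaussianPDFReal 0 1).integrableOn)
    ((integrable_gaussianPDFReal 0 1).integrableOn)]
  exact integral_gaussianPDFReal_eq_one 0 one_ne_zero

lemma stdNormalCDF_zero : stdNormalCDF 0 = 1/2 := by
  have := stdNormalCDF_add_neg 0
  rw [neg_zero] at this
  linarith

lemma stdNormalCDF_le_one (x : ℝ) : stdNormalCDF x ≤ 1 := by
  have h1 := stdNormalCDF_add_neg x
  have h2 := stdNormalCDF_nonneg (-x)
  linarith

lemma abs_stdNormalCDF_le_one (x : ℝ) : |stdNormalCDF x| ≤ 1 :=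
  abs_le.mpr ⟨by linarith [stdNormalCDF_nonneg x], stdNormalCDF_le_one x⟩

lemma phi_le_one (t : ℝ) : gaussianPDFReal 0 1 t ≤ 1 := by
  unfold gaussianPDFReal
  have h1 : Real.exp (-(t - 0)^2 / (2 * ((1:ℝ≥0):ℝ))) ≤ 1 := by
    rw [Real.exp_le_one_iff]
    have : (0:ℝ) ≤ (t - 0)^2 := sq_nonneg _
    have h2 : (0:ℝ) < 2 * ((1:ℝ≥0):ℝ) := by norm_num
    exact div_nonpos_of_nonpos_of_nonneg (by linarith) (le_of_lt h2)
  have h2 : (Real.sqrt (2 * π * ((1:ℝ≥0):ℝ)))⁻¹ ≤ 1 := by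
    rw [inv_le_one_iff₀]
    right
    rw [show (1:ℝ) = Real.sqrt 1 by simp]
    refine Real.sqrt_le_sqrt ?_
    push_cast
    nlinarith [Real.pi_gt_three]
  calc (Real.sqrt (2 * π * ((1:ℝ≥0):ℝ)))⁻¹ * Real.exp (-(t - 0)^2 / (2 * ((1:ℝ≥0):ℝ)))
      ≤ 1 * 1 := by
        apply mul_le_mul h2 h1 (Real.exp_nonneg _) zero_le_one
    _ = 1 := by norm_num

lemma integrable_stdNormalCDF_comp {g : ℝ → ℝ} (hg : Continuous g)
    (ν : Measure ℝ) [IsProbabilityMeasure ν] :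
    Integrable (fun z => stdNormalCDF (g z)) ν := by
  refine Integrable.mono' (integrable_const (1:ℝ))
    ((continuous_stdNormalCDF.comp hg).aestronglyMeasurable) ?_
  exact Filter.Eventually.of_forall fun z => abs_stdNormalCDF_le_one (g z)

/-- Key Gaussian convolution integral. -/
lemma conv_integral (v : ℝ≥0) (hv : v ≠ 0) (y : ℝ) :
    ∫ z, gaussianPDFReal 0 v z * gaussianPDFReal 0 1 (y + z) = gaussianPDFReal 0 (1 + v) y := by
  have hv' : (0:ℝ) < v := lt_of_le_of_ne v.coe_nonneg (by exact_mod_cast hv.symm)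
  set b : ℝ := (1 + v) / (2 * v) with hbdef
  have hb : 0 < b := by positivity
  set c : ℝ := v * y / (1 + v) with hcdef
  have h1v : (0:ℝ) < 1 + v := by positivity
  have key : ∀ z, gaussianPDFReal 0 v z * gaussianPDFReal 0 1 (y + z)
      = ((Real.sqrt (2*π*v))⁻¹ * (Real.sqrt (2*π*1))⁻¹ * Real.exp (-y^2/(2*(1+v))))
        * Real.exp (-b*(z+c)^2) := by
    intro z
    unfold gaussianPDFReal
    push_cast
    rw [mul_mul_mul_comm, ← Real.exp_add]
    conv_rhs => rw [mul_assoc, ← Real.exp_add]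
    congr 1
    rw [Real.exp_eq_exp, hbdef, hcdef]
    field_simp
    ring
  simp_rw [key]
  rw [integral_const_mul]
  have htr : ∫ z, Real.exp (-b*(z+c)^2) = ∫ z, Real.exp (-b*z^2) :=
    integral_add_right_eq_self (fun z => Real.exp (-b*z^2)) c
  rw [htr, integral_gaussian]
  have hpb : π / b = 2*π*(v:ℝ) * (1+(v:ℝ))⁻¹ := by rw [hbdef]; field_simp
  rw [hpb]
  unfold gaussianPDFReal
  simp only [sub_zero]
  push_cast
  have s2π : (0:ℝ) < Real.sqrt (2*π) := Real.sqrt_pos.mpr (by positivity)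
  have sv : (0:ℝ) < Real.sqrt v := Real.sqrt_pos.mpr hv'
  have s1v : (0:ℝ) < Real.sqrt (1+(v:ℝ)) := Real.sqrt_pos.mpr h1v
  have le2π : (0:ℝ) ≤ 2*π := by positivity
  rw [show 2*π*(v:ℝ)*(1+(v:ℝ))⁻¹ = (2*π)*((v:ℝ)*(1+(v:ℝ))⁻¹) by ring,
    Real.sqrt_mul le2π ((v:ℝ)*(1+(v:ℝ))⁻¹), Real.sqrt_mul v.coe_nonneg, Real.sqrt_inv,
    mul_one (2*π),
    Real.sqrt_mul le2π (1+(v:ℝ)),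
    show 2*π*(v:ℝ) = (2*π)*(v:ℝ) by ring, Real.sqrt_mul le2π (v:ℝ)]
  field_simp

lemma integral_gaussianReal_eq (m : ℝ) {v : ℝ≥0} (hv : v ≠ 0) (f : ℝ → ℝ) :
    ∫ z, f z ∂(gaussianReal m v) = ∫ z, gaussianPDFReal m v z * f z := by
  rw [gaussianReal_of_var_ne_zero m hv]
  have hd : gaussianPDF m v = fun x => ((gaussianPDFReal m v x).toNNReal : ℝ≥0∞) := rfl
  rw [hd, integral_withDensity_eq_integral_smul
    ((measurable_gaussianPDFReal m v).real_toNNReal) f]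
  congr 1
  funext z
  rw [NNReal.smul_def, smul_eq_mul, Real.coe_toNNReal _ (gaussianPDFReal_nonneg m v z)]

lemma hasDerivAt_F (ν : Measure ℝ) [IsProbabilityMeasure ν] (y : ℝ) :
    HasDerivAt (fun x => ∫ z, stdNormalCDF (x + z) ∂ν)
      (∫ z, gaussianPDFReal 0 1 (y + z) ∂ν) y := by
  have h := hasDerivAt_integral_of_dominated_loc_of_deriv_le (μ := ν) (x₀ := y)
    (F := fun x z => stdNormalCDF (x + z)) (F' := fun x z => gaussianPDFReal 0 1 (x + z))
    (bound := fun _ => (1:ℝ)) (s := Metric.ball y 1) (Metric.ball_mem_nhds y one_pos)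
    (Filter.Eventually.of_forall fun x =>
      (continuous_stdNormalCDF.comp (continuous_const.add continuous_id)).aestronglyMeasurable)
    (integrable_stdNormalCDF_comp (continuous_const.add continuous_id) ν)
    ((continuous_phi.comp (continuous_const.add continuous_id)).aestronglyMeasurable)
    (Filter.Eventually.of_forall fun z x _ => by
      rw [Real.norm_eq_abs, abs_of_nonneg (gaussianPDFReal_nonneg 0 1 (x + z))]
      exact phi_le_one (x + z))
    (integrable_const 1)
    (Filter.Eventually.of_forall fun z x _ => by
      have h := (hasDerivAt_stdNormalCDF (x + z)).comp x ((hasDerivAt_id x).add_const z)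
      exact h.congr_deriv (by simp))
  exact h.2

lemma hasDerivAt_H (v : ℝ≥0) (y : ℝ) :
    HasDerivAt (fun x => stdNormalCDF (x / Real.sqrt (1 + (v:ℝ))))
      (gaussianPDFReal 0 (1 + v) y) y := by
  have h1v : (0:ℝ) < 1 + v := by positivity
  have hs : (0:ℝ) < Real.sqrt (1 + (v:ℝ)) := Real.sqrt_pos.mpr h1v
  set s : ℝ := Real.sqrt (1 + (v:ℝ)) with hsdef
  have h := (hasDerivAt_stdNormalCDF (y / s)).comp y ((hasDerivAt_id y).div_const s)
  have hs2 : s^2 = 1 + (v:ℝ) := Real.sq_sqrt h1v.le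
  have heq : gaussianPDFReal 0 1 (y / s) * (1 / s) = gaussianPDFReal 0 (1 + v) y := by
    unfold gaussianPDFReal
    push_cast
    simp only [sub_zero]
    have hp : -(y/s)^2/(2*(1:ℝ)) = -y^2/(2*(1+(v:ℝ))) := by
      rw [div_pow, hs2]
      field_simp
    rw [hp, mul_one (2*π),
      show 2*π*(1+(v:ℝ)) = (2*π)*(1+(v:ℝ)) by ring,
      Real.sqrt_mul (by positivity : (0:ℝ) ≤ 2*π) (1+(v:ℝ)), ← hsdef]
    have hπ : (0:ℝ) < Real.sqrt (2*π) := Real.sqrt_pos.mpr (by positivity)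
    field_simp
  rw [heq] at h
  exact h

lemma neg_map_gaussianReal (v : ℝ≥0) :
    (gaussianReal 0 v).map (fun z => -z) = gaussianReal 0 v := by
  have h := gaussianReal_map_const_mul (μ := 0) (v := v) (-1)
  simp only [neg_one_mul, mul_zero, neg_zero] at h
  rw [h]
  congr 1
  ext
  norm_num

lemma F_zero (v : ℝ≥0) : ∫ z, stdNormalCDF z ∂(gaussianReal 0 v) = 1/2 := by
  have hsym : ∫ z, stdNormalCDF (-z) ∂(gaussianReal 0 v)
      = ∫ z, stdNormalCDF z ∂(gaussianReal 0 v) := by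
    conv_rhs => rw [← neg_map_gaussianReal v]
    rw [integral_map (measurable_neg.aemeasurable) continuous_stdNormalCDF.aestronglyMeasurable]
  have hint : Integrable (fun z => stdNormalCDF z) (gaussianReal 0 v) :=
    integrable_stdNormalCDF_comp continuous_id _
  have hintneg : Integrable (fun z => stdNormalCDF (-z)) (gaussianReal 0 v) :=
    integrable_stdNormalCDF_comp continuous_neg _
  have hsum : ∫ z, (stdNormalCDF z + stdNormalCDF (-z)) ∂(gaussianReal 0 v) = 1 := by
    rw [show (fun z => stdNormalCDF z + stdNormalCDF (-z)) = fun _ => (1:ℝ) by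
      funext z; exact stdNormalCDF_add_neg z]
    simp
  rw [integral_add hint hintneg, hsym] at hsum
  linarith

end StdNormalAux

open StdNormalAux in
/-- If `Z ~ N(μ, σ²)`, then `E[Φ(Z)] = Φ(μ / √(1 + σ²))`. -/
theorem expectation_stdNormalCDF_gaussian (μ : ℝ) (v : ℝ≥0) :
    ∫ z, stdNormalCDF z ∂(gaussianReal μ v) = stdNormalCDF (μ / Real.sqrt (1 + (v : ℝ))) := by
  by_cases hv : v = 0
  · subst hv
    rw [gaussianReal_zero_var, integral_dirac]
    norm_num
  · -- v ≠ 0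
    set ν : Measure ℝ := gaussianReal 0 v with hν
    have : IsProbabilityMeasure ν := by rw [hν]; infer_instance
    set F : ℝ → ℝ := fun x => ∫ z, stdNormalCDF (x + z) ∂ν with hF
    set H : ℝ → ℝ := fun x => stdNormalCDF (x / Real.sqrt (1 + (v:ℝ))) with hH
    have hLHS : ∫ z, stdNormalCDF z ∂(gaussianReal μ v) = F μ := by
      have hmap : ν.map (fun z => μ + z) = gaussianReal μ v := by
        have := gaussianReal_map_const_add (μ := 0) (v := v) μ
        simpa using this
      rw [← hmap, integral_map (measurable_const_add μ).aemeasurable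
        continuous_stdNormalCDF.aestronglyMeasurable]
    have hderiv : ∀ x, HasDerivAt (fun t => F t - H t) 0 x := by
      intro x
      have h1 : HasDerivAt F (gaussianPDFReal 0 (1 + v) x) x := by
        have h := hasDerivAt_F ν x
        have hval : ∫ z, gaussianPDFReal 0 1 (x + z) ∂ν = gaussianPDFReal 0 (1 + v) x := by
          rw [hν, integral_gaussianReal_eq 0 hv, conv_integral v hv x]
        rwa [hval] at h
      have h2 : HasDerivAt H (gaussianPDFReal 0 (1 + v) x) x := hasDerivAt_H v x
      exact (h1.sub h2).congr_deriv (sub_self _)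
    have hconst : F μ - H μ = F 0 - H 0 := by
      apply is_const_of_deriv_eq_zero (f := fun t => F t - H t)
      · exact fun x => (hderiv x).differentiableAt
      · exact fun x => (hderiv x).deriv
    have hF0 : F 0 = 1/2 := by
      have : F 0 = ∫ z, stdNormalCDF z ∂ν := by
        rw [hF]; simp
      rw [this, hν]
      exact F_zero v
    have hH0 : H 0 = 1/2 := by
      rw [hH]
      simp [stdNormalCDF_zero]
    rw [hLHS]
    have : F μ = H μ := by linarith [hconst]
    rw [this]
end

section
/- Let Y ∈ {0,1} with P(Y = 1 | α = t) = Φ(s(t)) where s(t) = t⟨a, w_α⟩/√(1 + aᵀW_βW_βᵀa + γ‖a‖₂²), α ~ N(0,1), Φ the standard normal CDF. Then the conditional entropy H(Y | α) = E_t[h_b(Φ(s(t)))] is, for each fixed t, a monotonically decreasing function of |s(t)|; consequently, over ‖w_α‖₂ ≤ c and arbitrary W_β, H(Y | α) is minimized when w_α = ± c a/‖a‖₂ and W_βᵀa = 0. -/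
open Matrix MeasureTheory ProbabilityTheory

/-- Conditional entropy `H(Y ∣ α) = E_{t ~ N(0,1)}[h_b(Φ(s(t)))]` where
`s(t) = t⟨a,w_α⟩ / √(1 + aᵀW_βW_βᵀa + γ‖a‖₂²)`. -/
noncomputable def condEntY {N : ℕ} (γ : ℝ) (a : Fin N → ℝ)
    (wα : Fin N → ℝ) (Wβ : Matrix (Fin N) (Fin (N - 1)) ℝ) : ℝ :=
  ∫ t, Real.binEntropy
      (stdNormalCDF (t * (a ⬝ᵥ wα) /
        Real.sqrt (1 + (Wβᵀ.mulVec a ⬝ᵥ Wβᵀ.mulVec a) + γ * (a ⬝ᵥ a))))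
    ∂(gaussianReal 0 1)

lemma stdNormalCDF_nonneg (x : ℝ) : 0 ≤ stdNormalCDF x :=
  setIntegral_nonneg measurableSet_Iic fun t _ => gaussianPDFReal_nonneg 0 1 t

lemma stdNormalCDF_mono : Monotone stdNormalCDF := fun x y hxy =>
  setIntegral_mono_set (integrable_gaussianPDFReal 0 1).integrableOn
    (ae_of_all _ fun t => gaussianPDFReal_nonneg 0 1 t)
    (HasSubset.Subset.eventuallyLE (Set.Iic_subset_Iic.2 hxy))

lemma stdNormalCDF_le_one (x : ℝ) : stdNormalCDF x ≤ 1 := by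
  rw [← integral_gaussianPDFReal_eq_one 0 one_ne_zero]
  exact setIntegral_le_integral (integrable_gaussianPDFReal 0 1)
    (ae_of_all _ fun t => gaussianPDFReal_nonneg 0 1 t)

lemma gaussianPDFReal_even (t : ℝ) : gaussianPDFReal 0 1 (-t) = gaussianPDFReal 0 1 t := by
  simp [gaussianPDFReal, neg_sq]

lemma stdNormalCDF_neg (x : ℝ) : stdNormalCDF (-x) = 1 - stdNormalCDF x := by
  have h1 : stdNormalCDF (-x) = ∫ t in Set.Ioi x, gaussianPDFReal 0 1 t := by
    rw [stdNormalCDF]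
    have : (∫ t in Set.Iic (-x), gaussianPDFReal 0 1 t)
        = ∫ t in Set.Iic (-x), gaussianPDFReal 0 1 (-t) := by
      refine setIntegral_congr_fun measurableSet_Iic fun t _ => ?_
      rw [gaussianPDFReal_even]
    rw [this, integral_comp_neg_Iic, neg_neg]
  have h2 : stdNormalCDF x + (∫ t in Set.Ioi x, gaussianPDFReal 0 1 t) = 1 := by
    rw [stdNormalCDF, ← integral_gaussianPDFReal_eq_one 0 one_ne_zero,
      ← MeasureTheory.integral_add_compl measurableSet_Iic (integrable_gaussianPDFReal 0 1),
      Set.compl_Iic]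
  rw [h1]; linarith

lemma stdNormalCDF_zero : stdNormalCDF 0 = 1 / 2 := by
  have := stdNormalCDF_neg 0
  rw [neg_zero] at this; linarith

lemma binEntropy_stdNormalCDF_abs (s : ℝ) :
    Real.binEntropy (stdNormalCDF s) = Real.binEntropy (stdNormalCDF |s|) := by
  rcases abs_cases s with ⟨h, _⟩ | ⟨h, _⟩
  · rw [h]
  · rw [h, stdNormalCDF_neg, Real.binEntropy_one_sub]

lemma binEntropy_stdNormalCDF_anti {s₁ s₂ : ℝ} (h : |s₁| ≤ |s₂|) :
    Real.binEntropy (stdNormalCDF s₂) ≤ Real.binEntropy (stdNormalCDF s₁) := by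
  rw [binEntropy_stdNormalCDF_abs s₁, binEntropy_stdNormalCDF_abs s₂]
  have hmem : ∀ u : ℝ, 0 ≤ u → stdNormalCDF u ∈ Set.Icc (2⁻¹ : ℝ) 1 := by
    intro u hu
    constructor
    · rw [show (2⁻¹ : ℝ) = stdNormalCDF 0 by rw [stdNormalCDF_zero]; norm_num]
      exact stdNormalCDF_mono hu
    · exact stdNormalCDF_le_one u
  exact Real.binEntropy_strictAntiOn.antitoneOn (hmem _ (abs_nonneg s₁))
    (hmem _ (abs_nonneg s₂)) (stdNormalCDF_mono h)

lemma stdNormalCDF_measurable : Measurable stdNormalCDF :=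
  stdNormalCDF_mono.measurable

lemma integrable_binEntropy_stdNormalCDF (q : ℝ) :
    Integrable (fun t => Real.binEntropy (stdNormalCDF (t * q))) (gaussianReal 0 1) := by
  have hmeas : Measurable fun t => Real.binEntropy (stdNormalCDF (t * q)) :=
    Real.binEntropy_continuous.measurable.comp
      (stdNormalCDF_measurable.comp (measurable_id.mul_const q))
  refine Integrable.mono' (integrable_const (Real.log 2)) hmeas.aestronglyMeasurable
    (ae_of_all _ fun t => ?_)
  rw [Real.norm_eq_abs, abs_of_nonneg
    (Real.binEntropy_nonneg (stdNormalCDF_nonneg _) (stdNormalCDF_le_one _))]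
  exact Real.binEntropy_le_log_two

lemma dotProduct_abs_le {N : ℕ} (a w : Fin N → ℝ) :
    |a ⬝ᵥ w| ≤ Real.sqrt (a ⬝ᵥ a) * Real.sqrt (w ⬝ᵥ w) := by
  have h := Finset.sum_mul_sq_le_sq_mul_sq Finset.univ a w
  have hann : (0:ℝ) ≤ ∑ i, a i ^ 2 := Finset.sum_nonneg fun i _ => sq_nonneg (a i)
  rw [show a ⬝ᵥ a = ∑ i, a i ^ 2 from by simp [dotProduct, sq],
    show w ⬝ᵥ w = ∑ i, w i ^ 2 from by simp [dotProduct, sq],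
    ← Real.sqrt_mul hann,
    show a ⬝ᵥ w = ∑ i, a i * w i from rfl, ← Real.sqrt_sq_eq_abs]
  exact Real.sqrt_le_sqrt h

/-- For each fixed `t`, `h_b(Φ(s))` is a monotonically decreasing function of `|s|`;
consequently, over `‖w_α‖₂ ≤ c` and arbitrary `W_β`, the conditional entropy `H(Y ∣ α)` is
minimized when `w_α = ± c a/‖a‖₂` and `W_βᵀ a = 0`. -/
theorem condEntY_minimized (N : ℕ) (γ c : ℝ) (hγ : 0 < γ) (hc : 0 < c)
    (a : Fin N → ℝ) (ha : a ≠ 0) :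
    (∀ s₁ s₂ : ℝ, |s₁| ≤ |s₂| →
        Real.binEntropy (stdNormalCDF s₂) ≤ Real.binEntropy (stdNormalCDF s₁)) ∧
      ∀ (wα' : Fin N → ℝ) (Wβ' : Matrix (Fin N) (Fin (N - 1)) ℝ),
        (wα' = (c / Real.sqrt (a ⬝ᵥ a)) • a ∨ wα' = -((c / Real.sqrt (a ⬝ᵥ a)) • a)) →
        Wβ'ᵀ.mulVec a = 0 →
        ∀ (wα : Fin N → ℝ) (Wβ : Matrix (Fin N) (Fin (N - 1)) ℝ),
          Real.sqrt (wα ⬝ᵥ wα) ≤ c →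
          condEntY γ a wα' Wβ' ≤ condEntY γ a wα Wβ := by
  refine ⟨fun s₁ s₂ h => binEntropy_stdNormalCDF_anti h, ?_⟩
  intro wα' Wβ' hwα' hWβ' wα Wβ hwα
  have hA : 0 < a ⬝ᵥ a := by
    rcases (dotProduct_self_eq_zero (v := a)).not.2 ha with h0
    have : 0 ≤ a ⬝ᵥ a := by
      simpa [dotProduct] using Finset.sum_nonneg fun i _ => mul_self_nonneg (a i)
    exact lt_of_le_of_ne this (Ne.symm h0)
  have hsA : 0 < Real.sqrt (a ⬝ᵥ a) := Real.sqrt_pos.2 hA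
  -- value of a ⬝ᵥ wα'
  have hdot' : |a ⬝ᵥ wα'| = c * Real.sqrt (a ⬝ᵥ a) := by
    have hval : a ⬝ᵥ ((c / Real.sqrt (a ⬝ᵥ a)) • a) = c * Real.sqrt (a ⬝ᵥ a) := by
      rw [dotProduct_smul, smul_eq_mul]
      field_simp
      linear_combination (-1 : ℝ) * Real.sq_sqrt hA.le
    rcases hwα' with h | h
    · rw [h, hval, abs_of_pos (mul_pos hc hsA)]
    · rw [h, dotProduct_neg, hval, abs_neg, abs_of_pos (mul_pos hc hsA)]
  -- denominators
  set v := Wβᵀ.mulVec a ⬝ᵥ Wβᵀ.mulVec a with hv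
  have hvnn : 0 ≤ v := by
    simpa [hv, dotProduct] using
      Finset.sum_nonneg fun i _ => mul_self_nonneg (Wβᵀ.mulVec a i)
  have hD'pos : 0 < 1 + (Wβ'ᵀ.mulVec a ⬝ᵥ Wβ'ᵀ.mulVec a) + γ * (a ⬝ᵥ a) := by
    rw [hWβ']
    simp only [zero_dotProduct]
    nlinarith
  have hDpos : 0 < 1 + v + γ * (a ⬝ᵥ a) := by nlinarith
  have hDle : 1 + (Wβ'ᵀ.mulVec a ⬝ᵥ Wβ'ᵀ.mulVec a) + γ * (a ⬝ᵥ a) ≤ 1 + v + γ * (a ⬝ᵥ a) := by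
    rw [hWβ']; simp only [zero_dotProduct]; linarith
  -- numerator bound
  have hnum : |a ⬝ᵥ wα| ≤ c * Real.sqrt (a ⬝ᵥ a) := by
    have h1 := dotProduct_abs_le a wα
    have h2 : Real.sqrt (wα ⬝ᵥ wα) ≤ c := hwα
    calc |a ⬝ᵥ wα| ≤ Real.sqrt (a ⬝ᵥ a) * Real.sqrt (wα ⬝ᵥ wα) := h1
      _ ≤ Real.sqrt (a ⬝ᵥ a) * c := by nlinarith [Real.sqrt_nonneg (wα ⬝ᵥ wα)]
      _ = c * Real.sqrt (a ⬝ᵥ a) := mul_comm _ _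
  -- pointwise inequality
  unfold condEntY
  simp_rw [mul_div_assoc]
  refine integral_mono (integrable_binEntropy_stdNormalCDF _)
    (integrable_binEntropy_stdNormalCDF _) fun t => ?_
  refine binEntropy_stdNormalCDF_anti ?_
  rw [abs_mul, abs_mul, abs_div, abs_div,
    abs_of_nonneg (Real.sqrt_nonneg _), abs_of_nonneg (Real.sqrt_nonneg _)]
  refine mul_le_mul_of_nonneg_left ?_ (abs_nonneg t)
  refine div_le_div₀ (by positivity) ?_ (Real.sqrt_pos.2 hD'pos) (Real.sqrt_le_sqrt hDle)
  rw [hdot'] at *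
  exact hnum
end
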